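/- If P is a uniquely solvable puzzle of width k, then |P| ≤ 2^k. -/
import Mathlib


/-- Exactly two of the three propositions hold. -/
def ExactlyTwo (A B C : Prop) : Prop :=
  (A ∧ B ∧ ¬C) ∨ (A ∧ ¬B ∧ C) ∨ (¬A ∧ B ∧ C)

/-- At least two of the three propositions hold. -/
def AtLeastTwo (A B C : Prop) : Prop :=
  (A ∧ B) ∨ (A ∧ C) ∨ (B ∧ C)

/-- A puzzle of width `k` is a finite set of rows in `{1,2,3}^k`; we use the
alphabet `Fin 3` whose three elements are denoted `1`, `2`, `3` (`3 = 0`).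
`P` is a strong uniquely solvable puzzle (strong USP). -/
def IsSUSP {k : ℕ} (P : Finset (Fin k → Fin 3)) : Prop :=
  ∀ π₁ π₂ π₃ : Equiv.Perm {r // r ∈ P},
    (π₁ = π₂ ∧ π₂ = π₃) ∨
    ∃ (r : {r // r ∈ P}) (c : Fin k),
      ExactlyTwo ((π₁ r).1 c = 1) ((π₂ r).1 c = 2) ((π₃ r).1 c = 3)

/-- `P` is a uniquely solvable puzzle (USP). -/
def IsUSP {k : ℕ} (P : Finset (Fin k → Fin 3)) : Prop :=
  ∀ π₁ π₂ π₃ : Equiv.Perm {r // r ∈ P},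
    (π₁ = π₂ ∧ π₂ = π₃) ∨
    ∃ (r : {r // r ∈ P}) (c : Fin k),
      AtLeastTwo ((π₁ r).1 c = 1) ((π₂ r).1 c = 2) ((π₃ r).1 c = 3)


/-- A uniquely solvable puzzle of width `k` has at most `2^k` rows. -/
theorem usp_card_le_two_pow {k : ℕ} (P : Finset (Fin k → Fin 3))
    (hP : IsUSP P) : P.card ≤ 2 ^ k := by
  classical
  have key : ∀ a b : {r // r ∈ P}, (∀ c, (a.1 c = 3 ↔ b.1 c = 3)) → a = b := by
    intro a b hab
    by_contra hne
    rcases hP 1 1 (Equiv.swap a b) with ⟨_, h2⟩ | ⟨r, c, h⟩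
    · exact hne (Equiv.swap_eq_one_iff.mp h2.symm)
    · have ht : ((Equiv.swap a b r).1 c = 3 ↔ r.1 c = 3) := by
        rcases eq_or_ne r a with rfl | ha
        · rw [Equiv.swap_apply_left]; exact (hab c).symm
        rcases eq_or_ne r b with rfl | hb
        · rw [Equiv.swap_apply_right]; exact hab c
        · rw [Equiv.swap_apply_of_ne_of_ne ha hb]
      simp only [Equiv.Perm.one_apply] at h
      rcases h with ⟨h1, h2⟩ | ⟨h1, h2⟩ | ⟨h1, h2⟩
      · rw [h1] at h2; exact absurd h2 (by decide)
      · rw [ht.mp h2] at h1; exact absurd h1 (by decide)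
      · rw [ht.mp h2] at h1; exact absurd h1 (by decide)
  have hf : Function.Injective (fun (a : {r // r ∈ P}) (c : Fin k) =>
      decide (a.1 c = 3)) := by
    intro a b hab
    apply key
    intro c
    have := congrFun hab c
    simpa using this
  calc P.card = Fintype.card {r // r ∈ P} := (Fintype.card_coe P).symm
    _ ≤ Fintype.card (Fin k → Bool) := Fintype.card_le_of_injective _ hf
    _ = 2 ^ k := by simp
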